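/- arXiv:2507.13552 — 7 statements merged into one kernel-verified Lean document; each statement's English description precedes it below -/
import Mathlib

section
/- Let (Ω, F, ℙ) be a probability space, let 𝒳 and 𝒫 be finite sets, let X : Ω → 𝒳 and P : Ω → 𝒫 be random variables, fix x ∈ 𝒳, and let D_x : Ω → {0,1} (the potential decision at x) and D : Ω → {0,1} (the observed decision) be random variables such that D(ω) = D_x(ω) for every ω in the event {X = x}. Assume positivity: ℙ(X = x, P = p) > 0 for every p ∈ 𝒫. Assume conditional independence of the potential decision and X given P: for every p ∈ 𝒫, ℙ(D_x = 1 and X = x | P = p) = ℙ(D_x = 1 | P = p) · ℙ(X = x | P = p). Then the average structural function μ(x) := E[D_x] satisfies μ(x) = Σ_{p ∈ 𝒫} ℙ(D = 1 | X = x, P = p) · ℙ(P = p). -/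
open MeasureTheory

/-- Conditional probability `ℙ(A | B) = ℙ(A ∩ B) / ℙ(B)` as a real number. -/
noncomputable def condPr {Ω : Type*} [MeasurableSpace Ω] (ℙ : Measure Ω) (A B : Set Ω) : ℝ :=
  (ℙ (A ∩ B)).toReal / (ℙ B).toReal

/-- Identification of the average structural function (discrete support version):
if the potential decision `Dx` is conditionally independent of `X` given the stated
report `P`, then `μ(x) = E[Dx] = Σ_p ℙ(D = 1 | X = x, P = p) ℙ(P = p)`. -/
theorem stmt0 {Ω XS PS : Type*} [MeasurableSpace Ω]
    [Fintype XS] [Fintype PS]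
    [MeasurableSpace XS] [MeasurableSingletonClass XS]
    [MeasurableSpace PS] [MeasurableSingletonClass PS]
    (ℙ : Measure Ω) [IsProbabilityMeasure ℙ]
    (X : Ω → XS) (P : Ω → PS) (hX : Measurable X) (hP : Measurable P)
    (x : XS) (Dx D : Ω → ℝ) (hDx : Measurable Dx) (hD : Measurable D)
    (hDx01 : ∀ ω, Dx ω = 0 ∨ Dx ω = 1) (hD01 : ∀ ω, D ω = 0 ∨ D ω = 1)
    (hagree : ∀ ω, X ω = x → D ω = Dx ω)
    (hpos : ∀ p : PS, 0 < ℙ {ω | X ω = x ∧ P ω = p})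
    (hCI : ∀ p : PS,
      condPr ℙ {ω | Dx ω = 1 ∧ X ω = x} {ω | P ω = p} =
        condPr ℙ {ω | Dx ω = 1} {ω | P ω = p} * condPr ℙ {ω | X ω = x} {ω | P ω = p}) :
    ∫ ω, Dx ω ∂ℙ =
      ∑ p : PS, condPr ℙ {ω | D ω = 1} {ω | X ω = x ∧ P ω = p} * (ℙ {ω | P ω = p}).toReal := by
  classical
  have hA : MeasurableSet {ω | Dx ω = 1} := hDx (measurableSet_singleton 1)
  have hPp : ∀ p : PS, MeasurableSet {ω | P ω = p} := fun p => hP (measurableSet_singleton p)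
  have hXx : MeasurableSet {ω | X ω = x} := hX (measurableSet_singleton x)
  have hfin : ∀ s : Set Ω, ℙ s ≠ ⊤ := fun s => (measure_lt_top ℙ s).ne
  -- Step 1: integral equals measure of {Dx = 1}
  have h1 : ∫ ω, Dx ω ∂ℙ = (ℙ {ω | Dx ω = 1}).toReal := by
    have : Dx = Set.indicator {ω | Dx ω = 1} (fun _ => (1 : ℝ)) := by
      funext ω
      rcases hDx01 ω with h | h <;>
        simp [Set.indicator, h]
    rw [this, integral_indicator_const _ hA]
    simp
    rfl
  rw [h1]
  -- Step 2: partition by values of P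
  have h2 : ℙ {ω | Dx ω = 1} = ∑ p : PS, ℙ ({ω | Dx ω = 1} ∩ {ω | P ω = p}) := by
    have : {ω | Dx ω = 1} = ⋃ p : PS, {ω | Dx ω = 1} ∩ {ω | P ω = p} := by
      ext ω; simp
    conv_lhs => rw [this]
    rw [measure_iUnion (fun p q hpq => by
        simp only [Function.onFun, Set.disjoint_left]
        rintro ω ⟨-, h1⟩ ⟨-, h2⟩
        exact hpq (h1.symm.trans h2)) (fun p => hA.inter (hPp p)), tsum_fintype]
  rw [h2, ENNReal.toReal_sum (fun p _ => hfin _)]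
  refine Finset.sum_congr rfl fun p _ => ?_
  -- set up real quantities
  set a := (ℙ ({ω | Dx ω = 1 ∧ X ω = x} ∩ {ω | P ω = p})).toReal with ha
  set b := (ℙ ({ω | Dx ω = 1} ∩ {ω | P ω = p})).toReal with hb
  set e := (ℙ ({ω | X ω = x} ∩ {ω | P ω = p})).toReal with he
  set c := (ℙ {ω | P ω = p}).toReal with hc
  have hepos : 0 < e := by
    rw [he]
    have : ({ω | X ω = x} ∩ {ω | P ω = p}) = {ω | X ω = x ∧ P ω = p} := by ext ω; simp
    rw [this]
    exact ENNReal.toReal_pos (hpos p).ne' (hfin _)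
  have hcpos : 0 < c := by
    have hle : ℙ {ω | X ω = x ∧ P ω = p} ≤ ℙ {ω | P ω = p} :=
      measure_mono (fun ω h => h.2)
    exact ENNReal.toReal_pos (lt_of_lt_of_le (hpos p) hle).ne' (hfin _)
  -- the CI equation: a / c = (b / c) * (e / c)
  have hci : a / c = (b / c) * (e / c) := hCI p
  have hac : a * c = b * e := by
    field_simp at hci
    exact mul_right_cancel₀ hcpos.ne' (by rw [hci])
  -- D agrees with Dx on {X = x}
  have hset : {ω | D ω = 1} ∩ {ω | X ω = x ∧ P ω = p}
      = {ω | Dx ω = 1 ∧ X ω = x} ∩ {ω | P ω = p} := by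
    ext ω
    simp only [Set.mem_inter_iff, Set.mem_setOf_eq]
    constructor
    · rintro ⟨hd, hx, hp⟩; exact ⟨⟨(hagree ω hx) ▸ hd, hx⟩, hp⟩
    · rintro ⟨⟨hd, hx⟩, hp⟩; exact ⟨(hagree ω hx).trans hd, hx, hp⟩
  have hset2 : {ω | X ω = x ∧ P ω = p} = {ω | X ω = x} ∩ {ω | P ω = p} := by
    ext ω; simp
  show b = condPr ℙ {ω | D ω = 1} {ω | X ω = x ∧ P ω = p} * c
  rw [condPr, hset, hset2, ← ha, ← he]
  field_simp
  nlinarith [hac]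
end

section
/- Let (Ω, F, ℙ) be a probability space, let Y : Ω → ℝ be integrable, and let D : Ω → ℝ be measurable with D(ω) ∈ {0,1} for all ω. Then for every φ ∈ ℝ: E[min(Y − φ, 0)] + φ·E[D] ≤ E[Y·D] ≤ E[max(Y + φ, 0)] − φ·E[D]. (All expectations are well defined since |Y·D| ≤ |Y|, |min(Y−φ,0)| ≤ |Y| + |φ|, and |max(Y+φ,0)| ≤ |Y| + |φ|.) -/
open MeasureTheory

/-- Weak duality bounds: for integrable `Y` and binary `D`, for every `φ ∈ ℝ`,
`E[min(Y − φ, 0)] + φ E[D] ≤ E[Y D] ≤ E[max(Y + φ, 0)] − φ E[D]`. -/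
theorem stmt2 {Ω : Type*} [MeasurableSpace Ω] (ℙ : Measure Ω) [IsProbabilityMeasure ℙ]
    (Y D : Ω → ℝ) (hY : Integrable Y ℙ) (hD : Measurable D)
    (hD01 : ∀ ω, D ω = 0 ∨ D ω = 1) (φ : ℝ) :
    (∫ ω, min (Y ω - φ) 0 ∂ℙ) + φ * ∫ ω, D ω ∂ℙ ≤ ∫ ω, Y ω * D ω ∂ℙ ∧
      ∫ ω, Y ω * D ω ∂ℙ ≤ (∫ ω, max (Y ω + φ) 0 ∂ℙ) - φ * ∫ ω, D ω ∂ℙ := by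
  have hDi : Integrable D ℙ := by
    apply Integrable.mono' (integrable_const (1 : ℝ)) hD.aestronglyMeasurable
    filter_upwards with ω
    rcases hD01 ω with h | h <;> simp [h]
  have hYD : Integrable (fun ω => Y ω * D ω) ℙ := by
    have hb : ∀ ω, ‖D ω‖ ≤ 1 := by
      intro ω; rcases hD01 ω with h | h <;> simp [h]
    exact (hY.bdd_mul hD.aestronglyMeasurable (c := 1) (Filter.Eventually.of_forall hb)).congr
      (Filter.Eventually.of_forall fun ω => mul_comm _ _)
  have hmin : Integrable (fun ω => min (Y ω - φ) 0) ℙ := by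
    apply Integrable.mono' (hY.abs.add (integrable_const |φ|))
      ((hY.aestronglyMeasurable.sub aestronglyMeasurable_const).inf
        aestronglyMeasurable_const)
    filter_upwards with ω
    simp only [Pi.inf_apply, Pi.sub_apply, Pi.add_apply, Real.norm_eq_abs]
    rcases le_total (Y ω - φ) 0 with h | h
    · rw [min_eq_left h]
      exact (abs_sub _ _).trans (le_refl _)
    · rw [min_eq_right h]
      simp only [abs_zero]
      positivity
  have hmax : Integrable (fun ω => max (Y ω + φ) 0) ℙ := by
    apply Integrable.mono' (hY.abs.add (integrable_const |φ|))
      ((hY.aestronglyMeasurable.add aestronglyMeasurable_const).sup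
        aestronglyMeasurable_const)
    filter_upwards with ω
    simp only [Pi.sup_apply, Pi.add_apply, Real.norm_eq_abs]
    rcases le_total (Y ω + φ) 0 with h | h
    · rw [max_eq_right h]
      simp only [abs_zero]
      positivity
    · rw [max_eq_left h]
      exact abs_add_le _ _
  constructor
  · have key := integral_mono (hmin.add (hDi.const_mul φ)) hYD (fun ω => ?_)
    · simpa [integral_add hmin (hDi.const_mul φ), integral_const_mul] using key
    · rcases hD01 ω with h | h
      · simpa [h] using min_le_right (Y ω - φ) 0
      · simp only [Pi.add_apply, Pi.sub_apply, h, mul_one]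
        have := min_le_left (Y ω - φ) 0; linarith
  · have key := integral_mono hYD (hmax.sub (hDi.const_mul φ)) (fun ω => ?_)
    · simpa [integral_sub hmax (hDi.const_mul φ), integral_const_mul] using key
    · rcases hD01 ω with h | h
      · simpa [h] using le_max_right (Y ω + φ) 0
      · simp only [Pi.add_apply, Pi.sub_apply, h, mul_one]
        have := le_max_left (Y ω + φ) 0; linarith
end

section
/- Let ν be a probability measure on ℝ such that the identity function y ↦ y is ν-integrable, and let q ∈ [0,1]. Let Π be the set of probability measures π on ℝ × Bool such that the pushforward of π under the first projection equals ν and π(ℝ × {true}) = q. Then sup_{π ∈ Π} ∫ y · 1{d = true} dπ(y, d) = inf_{φ ∈ ℝ} ( φ·q + ∫ max(y − φ, 0) dν(y) ). -/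
open MeasureTheory Set Filter Topology

lemma weak_duality (ν : Measure ℝ) [IsProbabilityMeasure ν] (hν : Integrable id ν)
    (q φ : ℝ) (π : Measure (ℝ × Bool)) [IsProbabilityMeasure π]
    (hmap : π.map Prod.fst = ν) (hqπ : (π (Set.univ ×ˢ {true})).toReal = q) :
    ∫ yd : ℝ × Bool, (if yd.2 = true then yd.1 else 0) ∂π ≤ φ * q + ∫ y, max (y - φ) 0 ∂ν := by
  set S : Set (ℝ × Bool) := Set.univ ×ˢ {true} with hSdef
  have hS : MeasurableSet S := MeasurableSet.univ.prod (measurableSet_singleton true)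
  have hmem : ∀ yd : ℝ × Bool, yd ∈ S ↔ yd.2 = true := by
    intro yd
    simp only [hSdef, Set.mem_prod, Set.mem_univ, true_and, Set.mem_singleton_iff]
  have hfst : Integrable (fun yd : ℝ × Bool => yd.1) π := by
    have h := hν
    rw [← hmap] at h
    exact (integrable_map_measure aestronglyMeasurable_id measurable_fst.aemeasurable).mp h
  have hsub : Integrable (fun yd : ℝ × Bool => yd.1 - φ) π := hfst.sub (integrable_const φ)
  have hmaxπ : Integrable (fun yd : ℝ × Bool => max (yd.1 - φ) 0) π := by
    simpa using (hfst.sub (integrable_const φ)).pos_part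
  have hEq : ∀ yd : ℝ × Bool, (if yd.2 = true then yd.1 else 0)
      = S.indicator (fun yd => yd.1 - φ) yd + S.indicator (fun _ => φ) yd := by
    intro yd
    by_cases h : yd ∈ S
    · rw [Set.indicator_of_mem h, Set.indicator_of_mem h, if_pos ((hmem yd).mp h)]
      ring
    · rw [Set.indicator_of_notMem h, Set.indicator_of_notMem h,
        if_neg (fun hh => h ((hmem yd).mpr hh))]
      ring
  rw [integral_congr_ae (Filter.Eventually.of_forall hEq),
    integral_add (hsub.indicator hS)
      ((integrable_const φ).indicator hS), integral_indicator_const φ hS, measureReal_def, hqπ]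
  rw [add_comm (φ * q)]
  gcongr
  · calc ∫ yd : ℝ × Bool, S.indicator (fun yd => yd.1 - φ) yd ∂π
        ≤ ∫ yd : ℝ × Bool, max (yd.1 - φ) 0 ∂π := by
          apply integral_mono (hsub.indicator hS) hmaxπ
          intro yd
          by_cases h : yd ∈ S
          · rw [Set.indicator_of_mem h]; exact le_max_left _ _
          · rw [Set.indicator_of_notMem h]; exact le_max_right _ _
      _ = ∫ y, max (y - φ) 0 ∂ν := by
          rw [← hmap, integral_map measurable_fst.aemeasurable]
          exact ((measurable_id.sub measurable_const).max measurable_const).aestronglyMeasurable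
  · simp [smul_eq_mul, mul_comm]

lemma construct (ν : Measure ℝ) [IsProbabilityMeasure ν] (hν : Integrable id ν)
    (μ : Measure ℝ) (hle : μ ≤ ν) :
    ∃ π : Measure (ℝ × Bool), IsProbabilityMeasure π ∧ π.map Prod.fst = ν ∧
      (π (Set.univ ×ˢ {true})).toReal = (μ Set.univ).toReal ∧
      ∫ yd : ℝ × Bool, (if yd.2 = true then yd.1 else 0) ∂π = ∫ y, y ∂μ := by
  haveI : IsFiniteMeasure μ :=
    ⟨lt_of_le_of_lt (hle Set.univ) (measure_lt_top ν Set.univ)⟩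
  set S : Set (ℝ × Bool) := Set.univ ×ˢ {true} with hSdef
  have hS : MeasurableSet S := MeasurableSet.univ.prod (measurableSet_singleton true)
  have ht : Measurable (fun y : ℝ => (y, true)) := measurable_id.prodMk measurable_const
  have hf : Measurable (fun y : ℝ => (y, false)) := measurable_id.prodMk measurable_const
  set π : Measure (ℝ × Bool) :=
    μ.map (fun y => (y, true)) + (ν - μ).map (fun y => (y, false)) with hπdef
  have hcancel : ν - μ + μ = ν := Measure.sub_add_cancel_of_le hle
  have hmapfst : π.map Prod.fst = ν := by
    rw [hπdef, Measure.map_add _ _ measurable_fst, Measure.map_map measurable_fst ht,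
      Measure.map_map measurable_fst hf]
    have : (Prod.fst ∘ fun y : ℝ => (y, true)) = id := rfl
    rw [this]
    have : (Prod.fst ∘ fun y : ℝ => (y, false)) = id := rfl
    rw [this, Measure.map_id, Measure.map_id, add_comm, hcancel]
  have hmem : ∀ yd : ℝ × Bool, yd ∈ S ↔ yd.2 = true := by
    intro yd
    simp only [hSdef, Set.mem_prod, Set.mem_univ, true_and, Set.mem_singleton_iff]
  have hprob : IsProbabilityMeasure π := by
    constructor
    calc π Set.univ = (π.map Prod.fst) Set.univ := by
          rw [Measure.map_apply measurable_fst MeasurableSet.univ, Set.preimage_univ]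
      _ = ν Set.univ := by rw [hmapfst]
      _ = 1 := measure_univ
  have htpre : (fun y : ℝ => (y, true)) ⁻¹' S = Set.univ := by
    ext y; simp [hmem]
  have hfpre : (fun y : ℝ => (y, false)) ⁻¹' S = ∅ := by
    ext y; simp [hmem]
  have hmass : (π S).toReal = (μ Set.univ).toReal := by
    rw [hπdef, Measure.add_apply, Measure.map_apply ht hS, Measure.map_apply hf hS,
      htpre, hfpre]
    simp
  refine ⟨π, hprob, hmapfst, hmass, ?_⟩
  have hμint : Integrable id μ := hν.mono_measure hle
  have hsubint : Integrable id (ν - μ) := hν.mono_measure Measure.sub_le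
  have hmeasg : Measurable (fun yd : ℝ × Bool => if yd.2 = true then yd.1 else 0) := by
    have : (fun yd : ℝ × Bool => if yd.2 = true then yd.1 else 0)
        = S.indicator (fun yd => yd.1) := by
      funext yd
      by_cases h : yd.2 = true
      · rw [if_pos h, Set.indicator_of_mem ((hmem yd).mpr h)]
      · rw [if_neg h, Set.indicator_of_notMem (fun hm => h ((hmem yd).mp hm))]
    rw [this]
    exact measurable_fst.indicator hS
  have hint1 : Integrable (fun yd : ℝ × Bool => if yd.2 = true then yd.1 else 0)
      (μ.map (fun y => (y, true))) := by
    rw [integrable_map_measure hmeasg.aestronglyMeasurable ht.aemeasurable]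
    simp only [Function.comp_def, if_true]; exact hμint
  have hint2 : Integrable (fun yd : ℝ × Bool => if yd.2 = true then yd.1 else 0)
      ((ν - μ).map (fun y => (y, false))) := by
    rw [integrable_map_measure hmeasg.aestronglyMeasurable hf.aemeasurable]
    exact (integrable_const (0:ℝ)).congr (Filter.Eventually.of_forall (fun y => rfl))
  rw [hπdef, integral_add_measure hint1 hint2,
    integral_map ht.aemeasurable hmeasg.aestronglyMeasurable,
    integral_map hf.aemeasurable hmeasg.aestronglyMeasurable]
  simp [Function.comp_def]

lemma quantile_exists (ν : Measure ℝ) [IsProbabilityMeasure ν]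
    (q : ℝ) (h0 : 0 < q) (h1 : q < 1) :
    ∃ φ : ℝ, (ν (Set.Ioi φ)).toReal ≤ q ∧ q ≤ (ν (Set.Ici φ)).toReal := by
  have hfin : ∀ s : Set ℝ, ν s ≠ ⊤ := fun s => measure_ne_top ν s
  set S : Set ℝ := {x | (ν (Set.Ioi x)).toReal ≤ q} with hSdef
  have hanti : ∀ x y : ℝ, x ≤ y → (ν (Set.Ioi y)).toReal ≤ (ν (Set.Ioi x)).toReal := by
    intro x y hxy
    exact ENNReal.toReal_mono (hfin _) (measure_mono (Set.Ioi_subset_Ioi hxy))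
  have hup : ∀ x ∈ S, ∀ y, x ≤ y → y ∈ S := fun x hx y hxy => le_trans (hanti x y hxy) hx
  -- S is nonempty
  have htop : Tendsto (fun n : ℕ => ν (Set.Ioi (n : ℝ))) atTop (𝓝 0) := by
    have hI : (⋂ n : ℕ, Set.Ioi ((n : ℝ))) = ∅ := by
      ext x
      simp only [Set.mem_iInter, Set.mem_Ioi, Set.mem_empty_iff_false, iff_false, not_forall,
        not_lt]
      obtain ⟨n, hn⟩ := exists_nat_ge x
      exact ⟨n, hn⟩
    have := tendsto_measure_iInter_atTop (μ := ν)
      (fun n : ℕ => (measurableSet_Ioi (a := (n:ℝ))).nullMeasurableSet)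
      (fun n m hnm => Set.Ioi_subset_Ioi (by exact_mod_cast hnm)) ⟨0, hfin _⟩
    rwa [hI, measure_empty] at this
  have hSne : S.Nonempty := by
    have h2 : Tendsto (fun n : ℕ => (ν (Set.Ioi (n : ℝ))).toReal) atTop (𝓝 0) := by
      have := (ENNReal.tendsto_toReal (a := 0) (by simp)).comp htop
      simpa [Function.comp_def] using this
    have := h2.eventually (eventually_lt_nhds h0)
    obtain ⟨n, hn⟩ := this.exists
    exact ⟨(n : ℝ), le_of_lt hn⟩
  -- S is bounded below
  have hbot : Tendsto (fun n : ℕ => ν (Set.Ioi (-(n : ℝ)))) atTop (𝓝 (ν Set.univ)) := by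
    have hU : (⋃ n : ℕ, Set.Ioi (-(n : ℝ))) = Set.univ := by
      ext x
      simp only [Set.mem_iUnion, Set.mem_Ioi, Set.mem_univ, iff_true]
      obtain ⟨n, hn⟩ := exists_nat_gt (-x)
      exact ⟨n, by linarith⟩
    have := tendsto_measure_iUnion_atTop (μ := ν)
      (fun n m hnm => Set.Ioi_subset_Ioi (by exact_mod_cast neg_le_neg (Nat.cast_le.mpr hnm)))
    rwa [hU] at this
  have hSbdd : BddBelow S := by
    have h2 : Tendsto (fun n : ℕ => (ν (Set.Ioi (-(n : ℝ)))).toReal) atTop (𝓝 1) := by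
      have := (ENNReal.tendsto_toReal (a := ν Set.univ) (hfin _)).comp hbot
      simpa [Function.comp_def] using this
    obtain ⟨n, hn⟩ := (h2.eventually (eventually_gt_nhds h1)).exists
    refine ⟨-(n : ℝ), fun x hx => ?_⟩
    by_contra hc
    push_neg at hc
    exact absurd (le_trans (hanti _ _ hc.le) hx) (not_le.mpr hn)
  set φ := sInf S with hφdef
  have hmemS : ∀ n : ℕ, φ + 1 / (n + 1) ∈ S := by
    intro n
    have hlt : sInf S < φ + 1 / (n + 1) := by
      rw [← hφdef]
      have : (0:ℝ) < 1 / (n + 1) := by positivity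
      linarith
    obtain ⟨x, hxS, hx⟩ := exists_lt_of_csInf_lt hSne hlt
    exact hup x hxS _ hx.le
  constructor
  · -- ν (Ioi φ) ≤ q
    constructor
    · have hU : Set.Ioi φ = ⋃ n : ℕ, Set.Ioi (φ + 1 / (n + 1)) := by
        ext y
        simp only [Set.mem_Ioi, Set.mem_iUnion]
        constructor
        · intro hy
          obtain ⟨n, hn⟩ := exists_nat_one_div_lt (sub_pos.mpr hy)
          exact ⟨n, by push_cast at hn ⊢; linarith⟩
        · rintro ⟨n, hn⟩
          have : (0:ℝ) < 1 / (n + 1) := by positivity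
          linarith
      have hmono : Monotone (fun n : ℕ => Set.Ioi (φ + 1 / ((n : ℝ) + 1))) := by
        intro n m hnm
        apply Set.Ioi_subset_Ioi
        have h1 : (0:ℝ) < n + 1 := by positivity
        have h2 : (n:ℝ) + 1 ≤ (m:ℝ) + 1 := by exact_mod_cast by omega
        have := one_div_le_one_div_of_le h1 h2
        linarith
      have htend := tendsto_measure_iUnion_atTop (μ := ν) hmono
      rw [← hU] at htend
      have hle : ν (Set.Ioi φ) ≤ ENNReal.ofReal q := by
        refine le_of_tendsto' htend (fun n => ?_)
        simp only [Function.comp_apply]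
        rw [ENNReal.le_ofReal_iff_toReal_le (hfin _) h0.le]
        exact hmemS n
      rw [← ENNReal.le_ofReal_iff_toReal_le (hfin _) h0.le]
      exact hle
    · -- q ≤ ν (Ici φ)
      have hI : Set.Ici φ = ⋂ n : ℕ, Set.Ioi (φ - 1 / (n + 1)) := by
        ext y
        simp only [Set.mem_Ici, Set.mem_iInter, Set.mem_Ioi]
        constructor
        · intro hy n
          have : (0:ℝ) < 1 / (n + 1) := by positivity
          linarith
        · intro h
          by_contra hc
          push_neg at hc
          obtain ⟨n, hn⟩ := exists_nat_one_div_lt (sub_pos.mpr hc)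
          have := h n
          push_cast at hn this ⊢
          linarith
      have hantiS : Antitone (fun n : ℕ => Set.Ioi (φ - 1 / ((n : ℝ) + 1))) := by
        intro n m hnm
        apply Set.Ioi_subset_Ioi
        have h1 : (0:ℝ) < n + 1 := by positivity
        have h2 : (n:ℝ) + 1 ≤ (m:ℝ) + 1 := by exact_mod_cast by omega
        have := one_div_le_one_div_of_le h1 h2
        linarith
      have htend := tendsto_measure_iInter_atTop (μ := ν)
        (fun n => (measurableSet_Ioi).nullMeasurableSet) hantiS ⟨0, hfin _⟩
      rw [← hI] at htend
      have hnotS : ∀ n : ℕ, φ - 1 / ((n:ℝ) + 1) ∉ S := by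
        intro n hc
        have := csInf_le hSbdd hc
        rw [← hφdef] at this
        have hpos : (0:ℝ) < 1 / (n + 1) := by positivity
        linarith
      have hge : ENNReal.ofReal q ≤ ν (Set.Ici φ) := by
        refine ge_of_tendsto' htend (fun n => ?_)
        have := hnotS n
        rw [hSdef, Set.mem_setOf_eq, not_le] at this
        simp only [Function.comp_apply]
        rw [ENNReal.ofReal_le_iff_le_toReal (hfin _)]
        exact this.le
      rw [← ENNReal.ofReal_le_iff_le_toReal (hfin _)]
      exact hge

lemma opt_measure (ν : Measure ℝ) [IsProbabilityMeasure ν] (hν : Integrable id ν)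
    (q φ : ℝ) (hq0 : 0 ≤ q)
    (ha : (ν (Set.Ioi φ)).toReal ≤ q) (hb : q ≤ (ν (Set.Ici φ)).toReal) :
    ∃ μ : Measure ℝ, μ ≤ ν ∧ (μ Set.univ).toReal = q ∧
      ∫ y, y ∂μ = φ * q + ∫ y, max (y - φ) 0 ∂ν := by
  have hfin : ∀ s : Set ℝ, ν s ≠ ⊤ := fun s => measure_ne_top ν s
  set a := (ν (Set.Ioi φ)).toReal with hadef
  set m := (ν ({φ} : Set ℝ)).toReal with hmdef
  have hm0 : 0 ≤ m := ENNReal.toReal_nonneg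
  have hdisj : Disjoint (Set.Ioi φ) ({φ} : Set ℝ) := by
    simp [Set.disjoint_singleton_right]
  have hIci : (ν (Set.Ici φ)).toReal = a + m := by
    rw [← Set.Ioi_union_left, measure_union hdisj (measurableSet_singleton φ),
      ENNReal.toReal_add (hfin _) (hfin _)]
  rw [hIci] at hb
  set c : ℝ := if m = 0 then 0 else (q - a) / m with hcdef
  have hcm : c * m = q - a := by
    by_cases hm : m = 0
    · rw [hcdef, if_pos hm, hm]
      have : q = a := le_antisymm (by linarith) ha
      linarith
    · rw [hcdef, if_neg hm, div_mul_cancel₀ _ hm]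
  have hmpos : m ≠ 0 → 0 < m := fun h => lt_of_le_of_ne hm0 (Ne.symm h)
  have hc0 : 0 ≤ c := by
    by_cases hm : m = 0
    · rw [hcdef, if_pos hm]
    · rw [hcdef, if_neg hm]
      exact div_nonneg (by linarith) hm0
  have hc1 : c ≤ 1 := by
    by_cases hm : m = 0
    · rw [hcdef, if_pos hm]; norm_num
    · rw [hcdef, if_neg hm]
      rw [div_le_one (hmpos hm)]
      linarith
  set μ : Measure ℝ := ν.restrict (Set.Ioi φ) + (ENNReal.ofReal c) • ν.restrict {φ}
    with hμdef
  have hμle : μ ≤ ν := by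
    rw [Measure.le_iff]
    intro s hs
    have h1 : μ s = ν (s ∩ Set.Ioi φ) + ENNReal.ofReal c * ν (s ∩ {φ}) := by
      rw [hμdef, Measure.add_apply, Measure.smul_apply, Measure.restrict_apply hs,
        Measure.restrict_apply hs, smul_eq_mul]
    rw [h1]
    calc ν (s ∩ Set.Ioi φ) + ENNReal.ofReal c * ν (s ∩ {φ})
        ≤ ν (s ∩ Set.Ioi φ) + ν (s ∩ {φ}) := by
          gcongr
          exact mul_le_of_le_one_left (by positivity) (ENNReal.ofReal_le_one.mpr hc1)
      _ = ν ((s ∩ Set.Ioi φ) ∪ (s ∩ {φ})) := by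
          rw [measure_union (hdisj.mono Set.inter_subset_right Set.inter_subset_right)
            (hs.inter (measurableSet_singleton φ))]
      _ ≤ ν s := measure_mono (by
          rw [← Set.inter_union_distrib_left]
          exact Set.inter_subset_left)
  have hmass : (μ Set.univ).toReal = q := by
    rw [hμdef, Measure.add_apply, Measure.smul_apply, Measure.restrict_apply MeasurableSet.univ,
      Measure.restrict_apply MeasurableSet.univ, Set.univ_inter, Set.univ_inter, smul_eq_mul,
      ENNReal.toReal_add (hfin _) (by
        exact ENNReal.mul_ne_top ENNReal.ofReal_ne_top (hfin _)),
      ENNReal.toReal_mul, ENNReal.toReal_ofReal hc0]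
    rw [← hadef, ← hmdef]
    linarith
  refine ⟨μ, hμle, hmass, ?_⟩
  -- compute ∫ y ∂μ
  have hrest : Integrable (fun y : ℝ => y) (ν.restrict (Set.Ioi φ)) := hν.restrict
  have hrsing : Integrable (fun y : ℝ => y) (ν.restrict ({φ} : Set ℝ)) := hν.restrict
  have hsing : ∫ y in ({φ} : Set ℝ), y ∂ν = φ * m := by
    rw [setIntegral_congr_fun (measurableSet_singleton φ)
      (fun y hy => by simpa using hy : Set.EqOn (fun y : ℝ => y) (fun _ => φ) {φ}),
      setIntegral_const, smul_eq_mul]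
    rw [hmdef, measureReal_def]; ring
  have hIμ : ∫ y, y ∂μ = (∫ y in Set.Ioi φ, y ∂ν) + c * φ * m := by
    rw [hμdef, integral_add_measure hrest (hrsing.smul_measure ENNReal.ofReal_ne_top),
      integral_smul_measure, ENNReal.toReal_ofReal hc0, hsing, smul_eq_mul]
    ring
  have hmaxν : Integrable (fun y : ℝ => max (y - φ) 0) ν := by
    simpa using (hν.sub (integrable_const φ)).pos_part
  have hmax : ∫ y, max (y - φ) 0 ∂ν = (∫ y in Set.Ioi φ, y ∂ν) - φ * a := by
    rw [← integral_add_compl (measurableSet_Ioi (a := φ)) hmaxν, Set.compl_Ioi]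
    have h2 : ∫ y in Set.Iic φ, max (y - φ) 0 ∂ν = 0 := by
      rw [setIntegral_congr_fun measurableSet_Iic
        (fun y hy => max_eq_right (by simp only [Set.mem_Iic] at hy; linarith) :
          Set.EqOn (fun y : ℝ => max (y - φ) 0) (fun _ => 0) (Set.Iic φ))]
      simp
    have h1 : ∫ y in Set.Ioi φ, max (y - φ) 0 ∂ν = (∫ y in Set.Ioi φ, y ∂ν) - φ * a := by
      rw [setIntegral_congr_fun measurableSet_Ioi
        (fun y hy => max_eq_left (by simp only [Set.mem_Ioi] at hy; linarith) :
          Set.EqOn (fun y : ℝ => max (y - φ) 0) (fun y => y - φ) (Set.Ioi φ))]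
      rw [integral_sub hrest (integrable_const φ), setIntegral_const, smul_eq_mul]
      rw [hadef, measureReal_def]; ring
    rw [h1, h2]
    ring
  rw [hIμ, hmax]
  linear_combination φ * hcm

lemma tendsto_edge0 (ν : Measure ℝ) [IsProbabilityMeasure ν] (hν : Integrable id ν) :
    Tendsto (fun n : ℕ => ∫ y, max (y - (n : ℝ)) 0 ∂ν) atTop (𝓝 0) := by
  have h := tendsto_integral_filter_of_dominated_convergence (μ := ν) (l := (atTop : Filter ℕ))
    (F := fun (n : ℕ) (y : ℝ) => max (y - (n : ℝ)) 0) (f := fun _ => (0 : ℝ))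
    (bound := fun y => |y|)
    (Eventually.of_forall (fun n =>
      ((measurable_id.sub measurable_const).max measurable_const).aestronglyMeasurable))
    (Eventually.of_forall (fun n => Eventually.of_forall (fun y => by
      rw [Real.norm_eq_abs, abs_of_nonneg (le_max_right _ _)]
      have hn : (0:ℝ) ≤ (n:ℝ) := Nat.cast_nonneg n
      calc max (y - (n : ℝ)) 0 ≤ max y 0 := max_le_max (by linarith) le_rfl
        _ ≤ |y| := max_le (le_abs_self y) (abs_nonneg y))))
    (by simpa using hν.abs)
    (Eventually.of_forall (fun y => by
      apply Tendsto.congr' _ tendsto_const_nhds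
      filter_upwards [tendsto_natCast_atTop_atTop.eventually_ge_atTop y] with n hn
      exact (max_eq_right (by linarith)).symm))
  simpa using h

lemma tendsto_edge1 (ν : Measure ℝ) [IsProbabilityMeasure ν] (hν : Integrable id ν) :
    Tendsto (fun n : ℕ => ∫ y, max y (-(n : ℝ)) ∂ν) atTop (𝓝 (∫ y, y ∂ν)) := by
  have h := tendsto_integral_filter_of_dominated_convergence (μ := ν) (l := (atTop : Filter ℕ))
    (F := fun (n : ℕ) (y : ℝ) => max y (-(n : ℝ))) (f := fun y => y)
    (bound := fun y => |y|)
    (Eventually.of_forall (fun n =>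
      (measurable_id.max measurable_const).aestronglyMeasurable))
    (Eventually.of_forall (fun n => Eventually.of_forall (fun y => by
      rw [Real.norm_eq_abs]
      have hn : (0:ℝ) ≤ (n:ℝ) := Nat.cast_nonneg n
      rw [abs_le]
      constructor
      · calc -|y| ≤ y := neg_abs_le y
          _ ≤ max y (-(n:ℝ)) := le_max_left _ _
      · calc max y (-(n:ℝ)) ≤ max y 0 := max_le_max le_rfl (by linarith)
          _ ≤ |y| := max_le (le_abs_self y) (abs_nonneg y))))
    (by simpa using hν.abs)
    (Eventually.of_forall (fun y => by
      apply Tendsto.congr' _ tendsto_const_nhds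
      filter_upwards [tendsto_natCast_atTop_atTop.eventually_ge_atTop (-y)] with n hn
      exact (max_eq_left (by linarith)).symm))
  exact h

/-- Strong duality (upper bound): among all couplings `π` of a fixed real marginal `ν`
with a `Bernoulli(q)` marginal for a Boolean coordinate, the supremum of
`∫ y · 1{d = true} dπ` equals `inf_φ (φ q + ∫ max(y − φ, 0) dν)`. -/
theorem stmt3 (ν : Measure ℝ) [IsProbabilityMeasure ν] (hν : Integrable id ν)
    (q : ℝ) (hq0 : 0 ≤ q) (hq1 : q ≤ 1) :
    sSup {r : ℝ | ∃ π : Measure (ℝ × Bool), IsProbabilityMeasure π ∧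
        π.map Prod.fst = ν ∧ (π (Set.univ ×ˢ {true})).toReal = q ∧
        r = ∫ yd : ℝ × Bool, (if yd.2 = true then yd.1 else 0) ∂π} =
      ⨅ φ : ℝ, (φ * q + ∫ y, max (y - φ) 0 ∂ν) := by
  set F : ℝ → ℝ := fun φ => φ * q + ∫ y, max (y - φ) 0 ∂ν with hFdef
  set A : Set ℝ := {r : ℝ | ∃ π : Measure (ℝ × Bool), IsProbabilityMeasure π ∧
      π.map Prod.fst = ν ∧ (π (Set.univ ×ˢ {true})).toReal = q ∧
      r = ∫ yd : ℝ × Bool, (if yd.2 = true then yd.1 else 0) ∂π} with hAdef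
  have memA : ∀ μ : Measure ℝ, μ ≤ ν → (μ Set.univ).toReal = q → (∫ y, y ∂μ) ∈ A := by
    intro μ hle hmass
    obtain ⟨π, h1, h2, h3, h4⟩ := construct ν hν μ hle
    exact ⟨π, h1, h2, by rw [h3, hmass], h4.symm⟩
  have hsmul_le : (ENNReal.ofReal q) • ν ≤ ν := by
    rw [Measure.le_iff]
    intro s hs
    rw [Measure.smul_apply, smul_eq_mul]
    exact mul_le_of_le_one_left (by positivity) (ENNReal.ofReal_le_one.mpr hq1)
  have hsmul_mass : (((ENNReal.ofReal q) • ν) Set.univ).toReal = q := by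
    rw [Measure.smul_apply, measure_univ, smul_eq_mul, mul_one, ENNReal.toReal_ofReal hq0]
  set r₀ : ℝ := ∫ y, y ∂((ENNReal.ofReal q) • ν) with hr₀def
  have hr₀ : r₀ ∈ A := memA _ hsmul_le hsmul_mass
  have hwd : ∀ r ∈ A, ∀ φ, r ≤ F φ := by
    intro r hr φ
    rw [hAdef, Set.mem_setOf_eq] at hr
    obtain ⟨π, hp, hm, hqq, rfl⟩ := hr
    haveI := hp
    exact weak_duality ν hν q φ π hm hqq
  have hne : A.Nonempty := ⟨r₀, hr₀⟩
  have hbddF : BddBelow (Set.range F) := by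
    refine ⟨r₀, ?_⟩
    rintro x ⟨φ, rfl⟩
    exact hwd r₀ hr₀ φ
  have hbddA : BddAbove A := ⟨F 0, fun r hr => hwd r hr 0⟩
  apply le_antisymm
  · exact csSup_le hne fun r hr => le_ciInf (hwd r hr)
  · rcases eq_or_lt_of_le hq0 with h0 | h0
    · -- q = 0
      have hr0 : (0:ℝ) ∈ A := by
        have h := memA 0 (Measure.zero_le ν) (by simp [← h0])
        simpa using h
      refine le_trans ?_ (le_csSup hbddA hr0)
      apply le_of_forall_pos_le_add
      intro ε hε
      obtain ⟨n, hn⟩ := ((tendsto_edge0 ν hν).eventually (gt_mem_nhds hε)).exists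
      calc ⨅ φ, F φ ≤ F (n : ℝ) := ciInf_le hbddF ((n : ℝ))
        _ = ∫ y, max (y - (n:ℝ)) 0 ∂ν := by rw [hFdef]; simp [← h0]
        _ ≤ 0 + ε := by linarith
    · rcases eq_or_lt_of_le hq1 with h1 | h1
      · -- q = 1
        have hr1 : (∫ y, y ∂ν) ∈ A := memA ν le_rfl (by rw [measure_univ, h1]; simp)
        refine le_trans ?_ (le_csSup hbddA hr1)
        apply le_of_forall_pos_le_add
        intro ε hε
        have hFn : ∀ n : ℕ, F (-(n:ℝ)) = ∫ y, max y (-(n:ℝ)) ∂ν := by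
          intro n
          have hpt : ∀ y : ℝ, max y (-(n:ℝ)) = max (y - (-(n:ℝ))) 0 + (-(n:ℝ)) := by
            intro y
            rcases le_total y (-(n:ℝ)) with h | h
            · rw [max_eq_right h, max_eq_right (by linarith)]; ring
            · rw [max_eq_left h, max_eq_left (by linarith)]; ring
          rw [integral_congr_ae (Filter.Eventually.of_forall hpt),
            integral_add (by simpa using (hν.sub (integrable_const (-(n:ℝ)))).pos_part)
              (integrable_const (-(n:ℝ))), integral_const, probReal_univ]
          rw [hFdef, h1]
          simp only [smul_eq_mul, one_smul, mul_one, ENNReal.toReal_one, one_mul]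
          ring
        obtain ⟨n, hn⟩ := ((tendsto_edge1 ν hν).eventually
          (gt_mem_nhds (lt_add_of_pos_right _ hε))).exists
        calc ⨅ φ, F φ ≤ F (-(n:ℝ)) := ciInf_le hbddF _
          _ = ∫ y, max y (-(n:ℝ)) ∂ν := hFn n
          _ ≤ (∫ y, y ∂ν) + ε := hn.le
      · -- 0 < q < 1
        obtain ⟨φ, hφa, hφb⟩ := quantile_exists ν q h0 h1
        obtain ⟨μ, hμle, hμmass, hμeq⟩ := opt_measure ν hν q φ hq0 hφa hφb
        have hmem := memA μ hμle hμmass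
        rw [hμeq] at hmem
        exact le_trans (ciInf_le hbddF φ) (le_csSup hbddA hmem)
end

section
/- Let ν be a probability measure on ℝ such that the identity function y ↦ y is ν-integrable, and let q ∈ [0,1]. Let Π be the set of probability measures π on ℝ × Bool such that the pushforward of π under the first projection equals ν and π(ℝ × {true}) = q. Then inf_{π ∈ Π} ∫ y · 1{d = true} dπ(y, d) = sup_{φ ∈ ℝ} ( φ·q + ∫ min(y − φ, 0) dν(y) ). -/
open MeasureTheory

section Stmt4Aux

open Set Filter Topology ENNReal

private lemma stmt4_min_integrable (ν : Measure ℝ) [IsFiniteMeasure ν]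
    (hν : Integrable id ν) (φ : ℝ) :
    Integrable (fun y : ℝ => min (y - φ) 0) ν := by
  have h := (hν.sub (integrable_const φ)).inf (integrable_const (0:ℝ))
  simpa [Pi.inf_def, Pi.sub_def] using h

private lemma stmt4_mem_value (ν : Measure ℝ) [IsProbabilityMeasure ν] (hν : Integrable id ν)
    (q : ℝ) (hq0 : 0 ≤ q) (ν₁ ν₀ : Measure ℝ) (hsum : ν₁ + ν₀ = ν)
    (hmass : ν₁ Set.univ = ENNReal.ofReal q) :
    ∃ π : Measure (ℝ × Bool), IsProbabilityMeasure π ∧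
        π.map Prod.fst = ν ∧ (π (Set.univ ×ˢ {true})).toReal = q ∧
        (∫ y, y ∂ν₁) = ∫ yd : ℝ × Bool, (if yd.2 = true then yd.1 else 0) ∂π := by
  have hle₁ : ν₁ ≤ ν := hsum ▸ Measure.le_add_right le_rfl
  have e₁ : MeasurableEmbedding (fun y : ℝ => (y, true)) :=
    measurableEmbedding_prod_mk_right (β := ℝ) true
  have e₀ : MeasurableEmbedding (fun y : ℝ => (y, false)) :=
    measurableEmbedding_prod_mk_right (β := ℝ) false
  set π : Measure (ℝ × Bool) := ν₁.map (fun y => (y, true)) + ν₀.map (fun y => (y, false)) with hπ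
  have hint₁ : Integrable id ν₁ := hν.mono_measure hle₁
  have hS : MeasurableSet ((Set.univ : Set ℝ) ×ˢ ({true} : Set Bool)) :=
    MeasurableSet.univ.prod (measurableSet_singleton true)
  refine ⟨π, ?_, ?_, ?_, ?_⟩
  · constructor
    rw [hπ, Measure.add_apply, e₁.map_apply, e₀.map_apply]
    simp only [Set.preimage_univ]
    have : ν₁ Set.univ + ν₀ Set.univ = (ν₁ + ν₀) Set.univ := rfl
    rw [this, hsum, measure_univ]
  · rw [hπ, Measure.map_add _ _ measurable_fst, Measure.map_map measurable_fst e₁.measurable,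
      Measure.map_map measurable_fst e₀.measurable]
    have h1 : (Prod.fst ∘ fun y : ℝ => (y, true)) = id := rfl
    have h0 : (Prod.fst ∘ fun y : ℝ => (y, false)) = id := rfl
    rw [h1, h0, Measure.map_id, Measure.map_id, hsum]
  · rw [hπ, Measure.add_apply, e₁.map_apply, e₀.map_apply]
    have h1 : (fun y : ℝ => (y, true)) ⁻¹' (Set.univ ×ˢ {true}) = Set.univ := by ext y; simp
    have h0 : (fun y : ℝ => (y, false)) ⁻¹' (Set.univ ×ˢ {true}) = ∅ := by ext y; simp
    rw [h1, h0, hmass, measure_empty, add_zero, ENNReal.toReal_ofReal hq0]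
  · have hi₁ : Integrable (fun yd : ℝ × Bool => if yd.2 = true then yd.1 else 0)
        (ν₁.map (fun y => (y, true))) := by
      rw [e₁.integrable_map_iff]
      simp [Function.comp_def]; exact hint₁
    have hi₀ : Integrable (fun yd : ℝ × Bool => if yd.2 = true then yd.1 else 0)
        (ν₀.map (fun y => (y, false))) := by
      rw [e₀.integrable_map_iff]
      have h0 : ((fun yd : ℝ × Bool => if yd.2 = true then yd.1 else 0) ∘ fun y : ℝ => (y, false))
          = fun _ => (0:ℝ) := by funext y; simp
      rw [h0]
      exact integrable_zero ℝ ℝ ν₀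
    rw [hπ, integral_add_measure hi₁ hi₀, e₁.integral_map, e₀.integral_map]
    simp

private lemma stmt4_weak_duality (ν : Measure ℝ) [IsProbabilityMeasure ν] (hν : Integrable id ν)
    (q : ℝ) (φ : ℝ) (π : Measure (ℝ × Bool)) [IsProbabilityMeasure π]
    (hmap : π.map Prod.fst = ν)
    (hmass : (π ((Set.univ : Set ℝ) ×ˢ ({true} : Set Bool))).toReal = q) :
    φ * q + ∫ y, min (y - φ) 0 ∂ν ≤ ∫ yd : ℝ × Bool, (if yd.2 = true then yd.1 else 0) ∂π := by
  have hS : MeasurableSet ((Set.univ : Set ℝ) ×ˢ ({true} : Set Bool)) :=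
    MeasurableSet.univ.prod (measurableSet_singleton true)
  have hsetm : MeasurableSet {yd : ℝ × Bool | yd.2 = true} := by
    have : {yd : ℝ × Bool | yd.2 = true} = Prod.snd ⁻¹' {true} := by ext yd; simp
    rw [this]; exact measurable_snd (measurableSet_singleton true)
  have hfst : Integrable (fun yd : ℝ × Bool => yd.1) π := by
    have h := hν
    rw [← hmap] at h
    have := (integrable_map_measure aestronglyMeasurable_id measurable_fst.aemeasurable).1 h
    simpa [Function.comp] using this
  have hfmeas : Measurable (fun yd : ℝ × Bool => if yd.2 = true then yd.1 else 0) :=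
    Measurable.ite hsetm measurable_fst measurable_const
  have hf_int : Integrable (fun yd : ℝ × Bool => if yd.2 = true then yd.1 else 0) π := by
    refine hfst.abs.mono' hfmeas.aestronglyMeasurable ?_
    filter_upwards with yd
    by_cases h : yd.2 = true <;> simp [h, abs_nonneg]
  have hmin_ν : Integrable (fun y : ℝ => min (y - φ) 0) ν := stmt4_min_integrable ν hν φ
  have hminmeas : Measurable (fun y : ℝ => min (y - φ) 0) :=
    (measurable_id.sub measurable_const).min measurable_const
  have hmin_π : Integrable (fun yd : ℝ × Bool => min (yd.1 - φ) 0) π := by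
    have h := hmin_ν
    rw [← hmap] at h
    have := (integrable_map_measure hminmeas.aestronglyMeasurable
      measurable_fst.aemeasurable).1 h
    simpa [Function.comp_def] using this
  have hind_int : Integrable (fun yd : ℝ × Bool => if yd.2 = true then φ else 0) π := by
    refine (integrable_const |φ|).mono'
      (Measurable.ite hsetm measurable_const measurable_const).aestronglyMeasurable ?_
    filter_upwards with yd
    by_cases h : yd.2 = true <;> simp [h, abs_nonneg, le_abs_self]
  have hpt : ∀ yd : ℝ × Bool, (if yd.2 = true then φ else 0) + min (yd.1 - φ) 0
      ≤ (if yd.2 = true then yd.1 else 0) := by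
    intro yd
    by_cases h : yd.2 = true <;>
      simp only [h, if_true, Bool.false_eq_true, if_false]
    · have : min (yd.1 - φ) 0 ≤ yd.1 - φ := min_le_left _ _
      linarith
    · have : min (yd.1 - φ) 0 ≤ 0 := min_le_right _ _
      linarith
  calc φ * q + ∫ y, min (y - φ) 0 ∂ν
      = ∫ yd : ℝ × Bool, ((if yd.2 = true then φ else 0) + min (yd.1 - φ) 0) ∂π := by
        rw [integral_add hind_int hmin_π]
        congr 1
        · have hind : (fun yd : ℝ × Bool => if yd.2 = true then φ else 0)
              = Set.indicator ((Set.univ : Set ℝ) ×ˢ ({true} : Set Bool)) (fun _ => φ) := by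
            funext yd
            rcases yd with ⟨y, d⟩
            cases d <;> simp [Set.indicator_apply]
          rw [hind, integral_indicator_const _ hS, measureReal_def, hmass, smul_eq_mul, mul_comm]
        · rw [← hmap, integral_map measurable_fst.aemeasurable
            hminmeas.aestronglyMeasurable]
    _ ≤ ∫ yd : ℝ × Bool, (if yd.2 = true then yd.1 else 0) ∂π :=
        integral_mono (hind_int.add hmin_π) hf_int hpt

private lemma stmt4_quantile_exists (ν : Measure ℝ) [IsProbabilityMeasure ν] {q : ℝ}
    (hq0 : 0 < q) (hq1 : q < 1) :
    ∃ φ : ℝ, ν (Set.Iio φ) ≤ ENNReal.ofReal q ∧ ENNReal.ofReal q ≤ ν (Set.Iic φ) := by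
  set Q : ℝ≥0∞ := ENNReal.ofReal q with hQ
  have hQ0 : 0 < Q := ENNReal.ofReal_pos.2 hq0
  have hQ1 : Q < 1 := by
    rw [hQ, ← ENNReal.ofReal_one]
    exact (ENNReal.ofReal_lt_ofReal_iff one_pos).2 hq1
  set T : Set ℝ := {x | Q ≤ ν (Set.Iic x)} with hT
  have hup : ∀ {x y : ℝ}, x ∈ T → x ≤ y → y ∈ T := by
    intro x y hx hxy
    exact le_trans hx (measure_mono (Set.Iic_subset_Iic.2 hxy))
  have hne : T.Nonempty := by
    have htop := tendsto_measure_Iic_atTop (μ := ν)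
    rw [measure_univ] at htop
    have := htop.eventually_const_lt hQ1
    obtain ⟨x, hx⟩ := this.exists
    exact ⟨x, le_of_lt hx⟩
  have hbdd : BddBelow T := by
    have hsets : Tendsto (fun n : ℕ => ν (Set.Iic (-(n:ℝ)))) atTop (𝓝 0) := by
      have hinter : ⋂ n : ℕ, Set.Iic (-(n:ℝ)) = ∅ := by
        ext x
        simp only [Set.mem_iInter, Set.mem_Iic, Set.mem_empty_iff_false, iff_false, not_forall,
          not_le]
        obtain ⟨n, hn⟩ := exists_nat_gt (-x)
        exact ⟨n, by linarith⟩
      have := tendsto_measure_iInter_atTop (μ := ν)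
        (s := fun n : ℕ => Set.Iic (-(n:ℝ)))
        (fun n => measurableSet_Iic.nullMeasurableSet)
        (fun n m hnm => Set.Iic_subset_Iic.2 (by exact_mod_cast neg_le_neg (by exact_mod_cast hnm)))
        ⟨0, measure_ne_top ν _⟩
      rw [hinter] at this
      simpa [Function.comp_def] using this
    have := hsets.eventually_lt_const hQ0
    obtain ⟨n, hn⟩ := this.exists
    refine ⟨-(n:ℝ), fun x hx => ?_⟩
    by_contra hcon
    push_neg at hcon
    exact absurd (hup hx hcon.le) (not_le.2 hn)
  set φ : ℝ := sInf T with hφ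
  refine ⟨φ, ?_, ?_⟩
  · have hunion : Set.Iio φ = ⋃ n : ℕ, Set.Iic (φ - 1/(n+1)) := by
      ext x
      simp only [Set.mem_Iio, Set.mem_iUnion, Set.mem_Iic]
      constructor
      · intro hx
        obtain ⟨n, hn⟩ := exists_nat_one_div_lt (sub_pos.2 hx)
        exact ⟨n, by push_cast at hn ⊢; linarith⟩
      · rintro ⟨n, hn⟩
        have : (0:ℝ) < 1/(n+1) := by positivity
        linarith
    have hmono : Monotone (fun n : ℕ => Set.Iic (φ - 1/((n:ℝ)+1))) := by
      intro n m hnm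
      apply Set.Iic_subset_Iic.2
      have h1 : (1:ℝ)/((m:ℝ)+1) ≤ 1/((n:ℝ)+1) := by
        apply one_div_le_one_div_of_le (by positivity)
        exact_mod_cast Nat.add_le_add_right hnm 1
      linarith
    have hlim := tendsto_measure_iUnion_atTop (μ := ν) hmono
    rw [← hunion] at hlim
    refine le_of_tendsto hlim (Filter.Eventually.of_forall fun n => ?_)
    have hnotmem : φ - 1/((n:ℝ)+1) ∉ T := by
      intro hmem
      have := csInf_le hbdd hmem
      have hpos : (0:ℝ) < 1/((n:ℝ)+1) := by positivity
      rw [← hφ] at this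
      linarith
    simp only [hT, Set.mem_setOf_eq, not_le] at hnotmem
    exact hnotmem.le
  · have hmem : ∀ n : ℕ, φ + 1/((n:ℝ)+1) ∈ T := by
      intro n
      have hpos : (0:ℝ) < 1/((n:ℝ)+1) := by positivity
      have : sInf T < φ + 1/((n:ℝ)+1) := by rw [← hφ]; linarith
      obtain ⟨t, htT, htlt⟩ := (csInf_lt_iff hbdd hne).1 this
      exact hup htT htlt.le
    have hinter : Set.Iic φ = ⋂ n : ℕ, Set.Iic (φ + 1/((n:ℝ)+1)) := by
      ext x
      simp only [Set.mem_Iic, Set.mem_iInter]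
      constructor
      · intro hx n
        have : (0:ℝ) < 1/((n:ℝ)+1) := by positivity
        linarith
      · intro hx
        by_contra hcon
        push_neg at hcon
        obtain ⟨n, hn⟩ := exists_nat_one_div_lt (sub_pos.2 hcon)
        have := hx n
        push_cast at hn this ⊢
        linarith
    have hanti : Antitone (fun n : ℕ => Set.Iic (φ + 1/((n:ℝ)+1))) := by
      intro n m hnm
      apply Set.Iic_subset_Iic.2
      have h1 : (1:ℝ)/((m:ℝ)+1) ≤ 1/((n:ℝ)+1) := by
        apply one_div_le_one_div_of_le (by positivity)
        exact_mod_cast Nat.add_le_add_right hnm 1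
      linarith
    have hlim := tendsto_measure_iInter_atTop (μ := ν)
      (fun n => measurableSet_Iic.nullMeasurableSet) hanti ⟨0, measure_ne_top ν _⟩
    rw [← hinter] at hlim
    exact ge_of_tendsto hlim (Filter.Eventually.of_forall fun n => hmem n)

private lemma stmt4_opt_construction (ν : Measure ℝ) [IsProbabilityMeasure ν]
    (hν : Integrable id ν) {q : ℝ} (hq0 : 0 ≤ q) (φ : ℝ)
    (hA : ν (Set.Iio φ) ≤ ENNReal.ofReal q) (hIic : ENNReal.ofReal q ≤ ν (Set.Iic φ)) :
    ∃ ν₁ ν₀ : Measure ℝ, ν₁ + ν₀ = ν ∧ ν₁ Set.univ = ENNReal.ofReal q ∧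
      (∫ y, y ∂ν₁) = φ * q + ∫ y, min (y - φ) 0 ∂ν := by
  set Q : ℝ≥0∞ := ENNReal.ofReal q with hQ
  set A : Set ℝ := Set.Iio φ with hAdef
  set a : ℝ≥0∞ := ν {φ} with ha
  set b : ℝ≥0∞ := Q - ν A with hb
  set c : ℝ≥0∞ := b / a with hc
  have hAm : MeasurableSet A := measurableSet_Iio
  have hIic_split : ν (Set.Iic φ) = ν A + a := by
    have hu : A ∪ {φ} = Set.Iic φ := Set.Iio_union_right
    rw [← hu, measure_union (by simp [hAdef]) (measurableSet_singleton φ)]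
  have hb_le_a : b ≤ a := by
    rw [hb]
    refine tsub_le_iff_left.2 ?_
    calc Q ≤ ν (Set.Iic φ) := hIic
      _ = ν A + a := hIic_split
  have hc1 : c ≤ 1 := by
    calc c = b / a := hc
      _ ≤ a / a := by gcongr
      _ ≤ 1 := ENNReal.div_self_le_one
  have hcne : c ≠ ∞ := (lt_of_le_of_lt hc1 ENNReal.one_lt_top).ne
  have hca : c * a = b := by
    rcases eq_or_ne a 0 with h0 | h0
    · have hb0 : b = 0 := le_antisymm (h0 ▸ hb_le_a) zero_le
      simp [hb0, h0]
    · rw [hc, ENNReal.div_mul_cancel h0 (measure_ne_top ν _)]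
  refine ⟨ν.restrict A + c • ν.restrict {φ},
    (1 - c) • ν.restrict {φ} + ν.restrict (Set.Ioi φ), ?_, ?_, ?_⟩
  · have h1 : ν.restrict A + c • ν.restrict {φ} + ((1 - c) • ν.restrict {φ}
        + ν.restrict (Set.Ioi φ))
        = ν.restrict A + (c + (1 - c)) • ν.restrict {φ} + ν.restrict (Set.Ioi φ) := by
      rw [add_smul]
      abel
    rw [h1, add_tsub_cancel_of_le hc1, one_smul,
      ← Measure.restrict_union (by simp [hAdef]) (measurableSet_singleton φ)]
    have hu : A ∪ {φ} = Set.Iic φ := Set.Iio_union_right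
    rw [hu, ← Measure.restrict_union (by simp [Set.disjoint_left]) measurableSet_Ioi]
    have hu2 : Set.Iic φ ∪ Set.Ioi φ = Set.univ := Set.Iic_union_Ioi
    rw [hu2, Measure.restrict_univ]
  · rw [Measure.add_apply, Measure.smul_apply, smul_eq_mul, Measure.restrict_apply_univ,
      Measure.restrict_apply_univ, ← ha, hca, hb, add_tsub_cancel_of_le hA]
  · have hrs : ν.restrict {φ} = a • Measure.dirac φ := by
      rw [Measure.restrict_singleton, ha]
    have hint_min : Integrable (fun y : ℝ => min (y - φ) 0) ν := stmt4_min_integrable ν hν φ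
    have hintA : Integrable (fun y : ℝ => y) (ν.restrict A) := hν.restrict
    have hint_smul : Integrable (fun y : ℝ => y) (c • ν.restrict {φ}) :=
      (hν.restrict (s := {φ})).smul_measure hcne
    rw [integral_add_measure hintA hint_smul]
    have hI2 : (∫ y, y ∂(c • ν.restrict {φ})) = c.toReal * (a.toReal * φ) := by
      rw [integral_smul_measure, hrs, integral_smul_measure, integral_dirac]
      simp [smul_eq_mul]
    have hmin_split : (∫ y, min (y - φ) 0 ∂ν) = (∫ y in A, y ∂ν) - φ * (ν A).toReal := by
      rw [← integral_add_compl hAm hint_min]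
      have hcompl : (∫ y in Aᶜ, min (y - φ) 0 ∂ν) = 0 := by
        rw [setIntegral_congr_fun hAm.compl (g := fun _ => (0:ℝ)) ?_, integral_zero]
        intro y hy
        simp only [hAdef, Set.mem_compl_iff, Set.mem_Iio, not_lt] at hy
        simp [min_eq_right, sub_nonneg.2 hy]
      have hon : (∫ y in A, min (y - φ) 0 ∂ν) = ∫ y in A, (y - φ) ∂ν := by
        refine setIntegral_congr_fun hAm ?_
        intro y hy
        simp only [hAdef, Set.mem_Iio] at hy
        exact min_eq_left (by linarith)
      rw [hcompl, add_zero, hon, integral_sub hintA (integrable_const φ),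
        setIntegral_const]
      simp [Measure.restrict_apply_univ, smul_eq_mul, mul_comm, measureReal_def]
    rw [hI2, hmin_split]
    have hQne : Q ≠ ∞ := ENNReal.ofReal_ne_top
    have hkey : c.toReal * a.toReal = q - (ν A).toReal := by
      rw [← ENNReal.toReal_mul, hca, hb, ENNReal.toReal_sub_of_le hA hQne, hQ,
        ENNReal.toReal_ofReal hq0]
    rw [← ENNReal.toReal_mul] at hkey
    have hfin : c.toReal * (a.toReal * φ) = (q - (ν A).toReal) * φ := by
      rw [← mul_assoc, ← ENNReal.toReal_mul, hkey]
    rw [hfin]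
    ring

private lemma stmt4_tendsto_min_zero (ν : Measure ℝ) [IsProbabilityMeasure ν]
    (hν : Integrable id ν) :
    Tendsto (fun n : ℕ => ∫ y, min (y - (-(n:ℝ))) 0 ∂ν) atTop (𝓝 0) := by
  have h := tendsto_integral_of_dominated_convergence (μ := ν)
    (F := fun (n : ℕ) (y : ℝ) => min (y - (-(n:ℝ))) 0) (f := fun _ => (0:ℝ))
    (bound := fun y => |y|)
    (fun n => ((measurable_id.sub measurable_const).min measurable_const).aestronglyMeasurable)
    (by simpa using hν.abs)
    (fun n => by
      filter_upwards with y
      rw [Real.norm_eq_abs, abs_le]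
      constructor
      · refine le_trans (le_min (neg_abs_le y) (neg_nonpos.2 (abs_nonneg y))) ?_
        exact min_le_min (by linarith [Nat.cast_nonneg (α := ℝ) n]) le_rfl
      · exact le_trans (min_le_right _ _) (abs_nonneg y))
    (by
      filter_upwards with y
      have hev : ∀ᶠ n : ℕ in atTop, min (y - (-(n:ℝ))) 0 = 0 := by
        have h1 : ∀ᶠ n : ℕ in atTop, (-y : ℝ) ≤ (n : ℝ) :=
          tendsto_natCast_atTop_atTop.eventually (eventually_ge_atTop (-y))
        filter_upwards [h1] with n hn
        rw [min_eq_right]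
        linarith
      exact Tendsto.congr' (by filter_upwards [hev] with n hn; exact hn.symm)
        tendsto_const_nhds)
  simpa using h

private lemma stmt4_tendsto_min_mean (ν : Measure ℝ) [IsProbabilityMeasure ν]
    (hν : Integrable id ν) :
    Tendsto (fun n : ℕ => ∫ y, min y (n:ℝ) ∂ν) atTop (𝓝 (∫ y, y ∂ν)) := by
  exact tendsto_integral_of_dominated_convergence (μ := ν)
    (F := fun (n : ℕ) (y : ℝ) => min y (n:ℝ)) (f := fun y => y)
    (bound := fun y => |y|)
    (fun n => (measurable_id.min measurable_const).aestronglyMeasurable)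
    (by simpa using hν.abs)
    (fun n => by
      filter_upwards with y
      rw [Real.norm_eq_abs, abs_le]
      constructor
      · refine le_trans (le_min (neg_abs_le y) (neg_nonpos.2 (abs_nonneg y))) ?_
        exact min_le_min le_rfl (Nat.cast_nonneg n)
      · exact le_trans (min_le_left _ _) (le_abs_self y))
    (by
      filter_upwards with y
      have hev : ∀ᶠ n : ℕ in atTop, min y (n:ℝ) = y := by
        have h1 : ∀ᶠ n : ℕ in atTop, (y : ℝ) ≤ (n : ℝ) :=
          tendsto_natCast_atTop_atTop.eventually (eventually_ge_atTop y)
        filter_upwards [h1] with n hn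
        exact min_eq_left hn
      exact Tendsto.congr' (by filter_upwards [hev] with n hn; exact hn.symm)
        tendsto_const_nhds)

end Stmt4Aux

/-- Strong duality (lower bound): among all couplings `π` of a fixed real marginal `ν`
with a `Bernoulli(q)` marginal for a Boolean coordinate, the infimum of
`∫ y · 1{d = true} dπ` equals `sup_φ (φ q + ∫ min(y − φ, 0) dν)`. -/
theorem stmt4 (ν : Measure ℝ) [IsProbabilityMeasure ν] (hν : Integrable id ν)
    (q : ℝ) (hq0 : 0 ≤ q) (hq1 : q ≤ 1) :
    sInf {r : ℝ | ∃ π : Measure (ℝ × Bool), IsProbabilityMeasure π ∧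
        π.map Prod.fst = ν ∧ (π (Set.univ ×ˢ {true})).toReal = q ∧
        r = ∫ yd : ℝ × Bool, (if yd.2 = true then yd.1 else 0) ∂π} =
      ⨆ φ : ℝ, (φ * q + ∫ y, min (y - φ) 0 ∂ν) := by
  set S : Set ℝ := {r : ℝ | ∃ π : Measure (ℝ × Bool), IsProbabilityMeasure π ∧
        π.map Prod.fst = ν ∧ (π (Set.univ ×ˢ {true})).toReal = q ∧
        r = ∫ yd : ℝ × Bool, (if yd.2 = true then yd.1 else 0) ∂π} with hSdef
  have hmem : ∀ ν₁ ν₀ : Measure ℝ, ν₁ + ν₀ = ν → ν₁ Set.univ = ENNReal.ofReal q →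
      (∫ y, y ∂ν₁) ∈ S := by
    intro ν₁ ν₀ hsum hmass
    obtain ⟨π, h1, h2, h3, h4⟩ := stmt4_mem_value ν hν q hq0 ν₁ ν₀ hsum hmass
    exact ⟨π, h1, h2, h3, h4⟩
  have hprod : (∫ y, y ∂(ENNReal.ofReal q • ν)) ∈ S := by
    apply hmem (ENNReal.ofReal q • ν) (ENNReal.ofReal (1 - q) • ν)
    · rw [← add_smul, ← ENNReal.ofReal_add hq0 (by linarith)]
      norm_num
    · simp [measure_univ]
  have hweak : ∀ r ∈ S, ∀ φ : ℝ, φ * q + ∫ y, min (y - φ) 0 ∂ν ≤ r := by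
    rintro r ⟨π, hπ1, hπ2, hπ3, rfl⟩ φ
    exact stmt4_weak_duality ν hν q φ π hπ2 hπ3
  have hSne : S.Nonempty := ⟨_, hprod⟩
  have hbddS : BddBelow S := ⟨0 * q + ∫ y, min (y - 0) 0 ∂ν, fun r hr => hweak r hr 0⟩
  have hbddg : BddAbove (Set.range (fun φ : ℝ => φ * q + ∫ y, min (y - φ) 0 ∂ν)) := by
    refine ⟨∫ y, y ∂(ENNReal.ofReal q • ν), ?_⟩
    rintro x ⟨φ, rfl⟩
    exact hweak _ hprod φ
  apply le_antisymm
  · rcases lt_or_eq_of_le hq0 with hq0' | hq0'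
    · rcases lt_or_eq_of_le hq1 with hq1' | hq1'
      · -- 0 < q < 1
        obtain ⟨φ, hA, hIic⟩ := stmt4_quantile_exists ν hq0' hq1'
        obtain ⟨ν₁, ν₀, hsum, hmass, hval⟩ := stmt4_opt_construction ν hν hq0 φ hA hIic
        calc sInf S ≤ ∫ y, y ∂ν₁ := csInf_le hbddS (hmem ν₁ ν₀ hsum hmass)
          _ = φ * q + ∫ y, min (y - φ) 0 ∂ν := hval
          _ ≤ ⨆ φ : ℝ, (φ * q + ∫ y, min (y - φ) 0 ∂ν) := le_ciSup hbddg φ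
      · -- q = 1
        subst hq1'
        have hm : (∫ y, y ∂ν) ∈ S := hmem ν 0 (by simp) (by simp [ENNReal.ofReal_one])
        refine le_trans (csInf_le hbddS hm) ?_
        refine le_of_tendsto (stmt4_tendsto_min_mean ν hν) ?_
        filter_upwards with n
        have hpt : (fun y : ℝ => min y (n:ℝ)) = fun y => (n:ℝ) * 1 + min (y - (n:ℝ)) 0 := by
          funext y
          rcases le_total y (n:ℝ) with h | h
          · rw [min_eq_left h, min_eq_left (by linarith)]; ring
          · rw [min_eq_right h, min_eq_right (by linarith)]; ring
        have heq : (∫ y, min y (n:ℝ) ∂ν) = (n:ℝ) * 1 + ∫ y, min (y - (n:ℝ)) 0 ∂ν := by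
          rw [hpt, integral_add (integrable_const _) (stmt4_min_integrable ν hν (n:ℝ)),
            integral_const, measureReal_def, measure_univ]
          simp
        rw [heq]
        exact le_ciSup hbddg ((n:ℝ))
    · -- q = 0
      subst hq0'
      have hm : (∫ y, y ∂(0 : Measure ℝ)) ∈ S := hmem 0 ν (by simp) (by simp)
      have h0 : (∫ y, y ∂(0 : Measure ℝ)) = 0 := by simp
      refine le_trans (csInf_le hbddS hm) ?_
      rw [h0]
      refine le_of_tendsto (stmt4_tendsto_min_zero ν hν) ?_
      filter_upwards with n
      have heq : (∫ y, min (y - (-(n:ℝ))) 0 ∂ν)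
          = (-(n:ℝ)) * 0 + ∫ y, min (y - (-(n:ℝ))) 0 ∂ν := by ring
      rw [heq]
      exact le_ciSup hbddg (-(n:ℝ))
  · exact le_csInf hSne fun r hr => ciSup_le fun φ => hweak r hr φ
end

section
/- Let (E, 𝒜, λ) be a measure space, let f, g : E → ℝ be nonnegative integrable functions, let m : E → ℝ be measurable with 0 ≤ m(p) ≤ 1 for all p, and set e := ∫ (1 − m)·g dλ. Then for every φ ∈ ℝ: ∫ min(φ·g, f) dλ − φ·e ≤ ∫ m·f dλ. (The integrand min(φ·g, f) is integrable since |min(φ·g, f)| ≤ |φ|·g + f, and m·f is integrable since 0 ≤ m·f ≤ f.) -/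
open MeasureTheory

/-- Lower bound on the average structural function `∫ m f dλ` in measure-theoretic form:
for nonnegative integrable densities `f, g`, a structural function `0 ≤ m ≤ 1`, and
`e = ∫ (1 − m) g dλ`, every `φ ∈ ℝ` yields `∫ min(φ g, f) dλ − φ e ≤ ∫ m f dλ`. -/
theorem stmt5 {E : Type*} [MeasurableSpace E] (lam : Measure E)
    (f g m : E → ℝ) (hf : Integrable f lam) (hg : Integrable g lam)
    (hf0 : ∀ p, 0 ≤ f p) (hg0 : ∀ p, 0 ≤ g p)
    (hm : Measurable m) (hm0 : ∀ p, 0 ≤ m p) (hm1 : ∀ p, m p ≤ 1) (φ : ℝ) :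
    (∫ p, min (φ * g p) (f p) ∂lam) - φ * (∫ p, (1 - m p) * g p ∂lam) ≤
      ∫ p, m p * f p ∂lam := by
  have hmf : Integrable (fun p => m p * f p) lam := by
    refine hf.mono (hm.aestronglyMeasurable.mul hf.1) (Filter.Eventually.of_forall fun p => ?_)
    rw [Real.norm_eq_abs, Real.norm_eq_abs, abs_mul, abs_of_nonneg (hm0 p),
      abs_of_nonneg (hf0 p)]
    nlinarith [hf0 p, hm0 p, hm1 p]
  have h1mg : Integrable (fun p => (1 - m p) * g p) lam := by
    refine hg.mono (((measurable_const.sub hm).aestronglyMeasurable).mul hg.1)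
      (Filter.Eventually.of_forall fun p => ?_)
    rw [Real.norm_eq_abs, Real.norm_eq_abs, abs_mul, abs_of_nonneg (by linarith [hm1 p]),
      abs_of_nonneg (hg0 p)]
    nlinarith [hg0 p, hm0 p, hm1 p]
  have hmin : Integrable (fun p => min (φ * g p) (f p)) lam :=
    (hg.const_mul φ).inf hf
  have key : (∫ p, min (φ * g p) (f p) ∂lam) ≤
      ∫ p, m p * f p + φ * ((1 - m p) * g p) ∂lam := by
    refine integral_mono hmin (hmf.add (h1mg.const_mul φ)) fun p => ?_
    have h1 : min (φ * g p) (f p) ≤ f p := min_le_right _ _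
    have h2 : min (φ * g p) (f p) ≤ φ * g p := min_le_left _ _
    nlinarith [hm0 p, hm1 p]
  rw [integral_add hmf (h1mg.const_mul φ), integral_const_mul] at key
  linarith
end

section
/- Let (E, 𝒜, λ) be a measure space, let f, g : E → ℝ be nonnegative integrable functions, let m : E → ℝ be measurable with 0 ≤ m(p) ≤ 1 for all p, and set e := ∫ (1 − m)·g dλ. Then for every φ ∈ ℝ: ∫ m·f dλ ≤ ∫ max(−φ·g, f) dλ + φ·e. (The integrand max(−φ·g, f) is integrable since |max(−φ·g, f)| ≤ |φ|·g + f, and m·f is integrable since 0 ≤ m·f ≤ f.) -/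
open MeasureTheory

/-- Upper bound on the average structural function `∫ m f dλ` in measure-theoretic form:
for nonnegative integrable densities `f, g`, a structural function `0 ≤ m ≤ 1`, and
`e = ∫ (1 − m) g dλ`, every `φ ∈ ℝ` yields `∫ m f dλ ≤ ∫ max(−φ g, f) dλ + φ e`. -/
theorem stmt6 {E : Type*} [MeasurableSpace E] (lam : Measure E)
    (f g m : E → ℝ) (hf : Integrable f lam) (hg : Integrable g lam)
    (hf0 : ∀ p, 0 ≤ f p) (hg0 : ∀ p, 0 ≤ g p)
    (hm : Measurable m) (hm0 : ∀ p, 0 ≤ m p) (hm1 : ∀ p, m p ≤ 1) (φ : ℝ) :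
    ∫ p, m p * f p ∂lam ≤
      (∫ p, max (-φ * g p) (f p) ∂lam) + φ * (∫ p, (1 - m p) * g p ∂lam) := by
  have hmf : Integrable (fun p => m p * f p) lam := by
    refine hf.mono (hm.aestronglyMeasurable.mul hf.aestronglyMeasurable) ?_
    filter_upwards with p
    rw [Real.norm_eq_abs, Real.norm_eq_abs, abs_of_nonneg (mul_nonneg (hm0 p) (hf0 p)),
      abs_of_nonneg (hf0 p)]
    calc m p * f p ≤ 1 * f p := mul_le_mul_of_nonneg_right (hm1 p) (hf0 p)
      _ = f p := one_mul _
  have hmg : Integrable (fun p => (1 - m p) * g p) lam := by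
    refine hg.mono ((aestronglyMeasurable_const.sub hm.aestronglyMeasurable).mul
      hg.aestronglyMeasurable) ?_
    filter_upwards with p
    rw [Real.norm_eq_abs, Real.norm_eq_abs,
      abs_of_nonneg (mul_nonneg (by linarith [hm1 p]) (hg0 p)), abs_of_nonneg (hg0 p)]
    nlinarith [hm0 p, hg0 p]
  have hmax : Integrable (fun p => max (-φ * g p) (f p)) lam := by
    refine Integrable.mono' ((hg.const_mul |φ|).add hf)
      ((hg.aestronglyMeasurable.const_mul (-φ)).sup hf.aestronglyMeasurable) ?_
    filter_upwards with p
    rw [Real.norm_eq_abs, abs_of_nonneg (le_trans (hf0 p) (le_max_right _ _))]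
    simp only [Pi.add_apply]
    apply max_le
    · nlinarith [abs_nonneg φ, neg_abs_le φ, le_abs_self φ, hg0 p, hf0 p]
    · nlinarith [abs_nonneg φ, hg0 p]
  have key : ∫ p, m p * f p ∂lam ≤
      ∫ p, (max (-φ * g p) (f p) + φ * ((1 - m p) * g p)) ∂lam := by
    refine integral_mono hmf (hmax.add (hmg.const_mul φ)) fun p => ?_
    rcases le_or_gt (-φ * g p) (f p) with h | h
    · have := le_max_right (-φ * g p) (f p)
      nlinarith [hm0 p, hm1 p, hf0 p, hg0 p]
    · have := le_max_left (-φ * g p) (f p)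
      nlinarith [hm0 p, hm1 p, hf0 p, hg0 p]
  calc ∫ p, m p * f p ∂lam ≤ _ := key
    _ = (∫ p, max (-φ * g p) (f p) ∂lam) + φ * (∫ p, (1 - m p) * g p ∂lam) := by
        rw [integral_add hmax (hmg.const_mul φ), integral_const_mul]
end

section
/- Let (E, 𝒜, λ) be a measure space, let f, g : E → ℝ be measurable, and let u, v : E → ℝ be integrable. Then lim_{t → 0⁺} (1/t) · ∫ ( max(f + t·u, g + t·v) − max(f, g) ) dλ = ∫_{ {f > g} } u dλ + ∫_{ {f < g} } v dλ + ∫_{ {f = g} } max(u, v) dλ. In particular the one-sided limit exists. -/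
open MeasureTheory Filter

/-- Danskin-type formula: the one-sided directional derivative at `t = 0⁺` of
`t ↦ ∫ max(f + t u, g + t v) dλ` equals
`∫_{f > g} u + ∫_{f < g} v + ∫_{f = g} max(u, v)`. -/
theorem stmt12 {E : Type*} [MeasurableSpace E] (lam : Measure E)
    (f g : E → ℝ) (hf : Measurable f) (hg : Measurable g)
    (u v : E → ℝ) (hu : Integrable u lam) (hv : Integrable v lam) :
    Tendsto
      (fun t : ℝ =>
        (1 / t) * ∫ p, (max (f p + t * u p) (g p + t * v p) - max (f p) (g p)) ∂lam)
      (nhdsWithin 0 (Set.Ioi 0))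
      (nhds ((∫ p in {p | g p < f p}, u p ∂lam) + (∫ p in {p | f p < g p}, v p ∂lam)
        + ∫ p in {p | f p = g p}, max (u p) (v p) ∂lam)) := by
  set A : Set E := {p | g p < f p} with hA_def
  set B : Set E := {p | f p < g p} with hB_def
  set C : Set E := {p | f p = g p} with hC_def
  have hA : MeasurableSet A := measurableSet_lt hg hf
  have hB : MeasurableSet B := measurableSet_lt hf hg
  have hC : MeasurableSet C := measurableSet_eq_fun hf hg
  have hmax : Integrable (fun p => max (u p) (v p)) lam := hu.sup hv
  set L : E → ℝ := fun p =>
    A.indicator u p + B.indicator v p + C.indicator (fun q => max (u q) (v q)) p with hL_def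
  have hIL : Integrable L lam :=
    ((hu.indicator hA).add (hv.indicator hB)).add (hmax.indicator hC)
  have hIntL : ∫ p, L p ∂lam =
      (∫ p in A, u p ∂lam) + (∫ p in B, v p ∂lam)
        + ∫ p in C, max (u p) (v p) ∂lam := by
    have h1 : Integrable (fun p => A.indicator u p + B.indicator v p) lam :=
      (hu.indicator hA).add (hv.indicator hB)
    have h2 : Integrable (fun p => C.indicator (fun q => max (u q) (v q)) p) lam :=
      hmax.indicator hC
    rw [hL_def, integral_add h1 h2, integral_add (hu.indicator hA) (hv.indicator hB),
      integral_indicator hA, integral_indicator hB, integral_indicator hC]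
  rw [← hIntL]
  -- Dominated convergence
  have key : Tendsto
      (fun t : ℝ => ∫ p, (1 / t) * (max (f p + t * u p) (g p + t * v p) - max (f p) (g p)) ∂lam)
      (nhdsWithin 0 (Set.Ioi 0)) (nhds (∫ p, L p ∂lam)) := by
    apply tendsto_integral_filter_of_dominated_convergence (fun p => |u p| + |v p|)
    · filter_upwards with t
      have : AEMeasurable (fun p =>
          (1 / t) * (max (f p + t * u p) (g p + t * v p) - max (f p) (g p))) lam := by
        exact (((hf.aemeasurable.add (hu.1.aemeasurable.const_mul t)).max
          (hg.aemeasurable.add (hv.1.aemeasurable.const_mul t))).sub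
          (hf.aemeasurable.max hg.aemeasurable)).const_mul (1 / t)
      exact this.aestronglyMeasurable
    · filter_upwards [self_mem_nhdsWithin] with t (ht : t ∈ Set.Ioi 0)
      have ht' : (0:ℝ) < t := ht
      filter_upwards with p
      have h1 : |max (f p + t * u p) (g p + t * v p) - max (f p) (g p)|
          ≤ max |t * u p| |t * v p| := by
        have := abs_max_sub_max_le_max (f p + t * u p) (g p + t * v p) (f p) (g p)
        simpa using this
      have h2 : max |t * u p| |t * v p| = t * max |u p| |v p| := by
        rw [abs_mul, abs_mul, abs_of_pos ht']
        exact (mul_max_of_nonneg _ _ ht'.le).symm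
      calc ‖(1 / t) * (max (f p + t * u p) (g p + t * v p) - max (f p) (g p))‖
          = (1 / t) * |max (f p + t * u p) (g p + t * v p) - max (f p) (g p)| := by
            rw [Real.norm_eq_abs, abs_mul, abs_of_pos (by positivity : (0:ℝ) < 1 / t)]
        _ ≤ (1 / t) * (t * max |u p| |v p|) := by
            apply mul_le_mul_of_nonneg_left _ (by positivity)
            rw [← h2]; exact h1
        _ = max |u p| |v p| := by field_simp
        _ ≤ |u p| + |v p| := max_le (le_add_of_nonneg_right (abs_nonneg _))
            (le_add_of_nonneg_left (abs_nonneg _))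
    · exact hu.abs.add hv.abs
    · filter_upwards with p
      rcases lt_trichotomy (f p) (g p) with h | h | h
      · -- f p < g p : limit is v p
        have hLp : L p = v p := by
          simp only [hL_def, hA_def, hB_def, hC_def, Set.indicator_apply, Set.mem_setOf_eq]
          rw [if_neg (by exact not_lt.mpr h.le), if_pos h, if_neg h.ne]
          ring
        rw [hLp]
        have hev : ∀ᶠ t in nhdsWithin (0:ℝ) (Set.Ioi 0),
            (fun t : ℝ => (1 / t) * (max (f p + t * u p) (g p + t * v p)
              - max (f p) (g p))) t = v p := by
          have hc : Tendsto (fun t : ℝ => f p - g p + t * (u p - v p)) (nhds 0)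
              (nhds (f p - g p)) := by
            have : Continuous (fun t : ℝ => f p - g p + t * (u p - v p)) := by continuity
            simpa using this.tendsto 0
          have hlt : ∀ᶠ t in nhds (0:ℝ), f p - g p + t * (u p - v p) < 0 :=
            hc.eventually_lt_const (by linarith)
          filter_upwards [nhdsWithin_le_nhds hlt, self_mem_nhdsWithin]
            with t hlt' (ht : t ∈ Set.Ioi 0)
          have ht' : (0:ℝ) < t := ht
          have h3 : f p + t * u p ≤ g p + t * v p := by nlinarith
          rw [max_eq_right h3, max_eq_right h.le]
          field_simp
          ring
        exact Tendsto.congr' (Filter.EventuallyEq.symm hev) tendsto_const_nhds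
      · -- f p = g p : limit is max (u p) (v p)
        have hLp : L p = max (u p) (v p) := by
          simp only [hL_def, hA_def, hB_def, hC_def, Set.indicator_apply, Set.mem_setOf_eq]
          rw [if_neg (by simp [h]), if_neg (by simp [h]), if_pos h]
          ring
        rw [hLp]
        have hev : ∀ᶠ t in nhdsWithin (0:ℝ) (Set.Ioi 0),
            (fun t : ℝ => (1 / t) * (max (f p + t * u p) (g p + t * v p)
              - max (f p) (g p))) t = max (u p) (v p) := by
          filter_upwards [self_mem_nhdsWithin] with t (ht : t ∈ Set.Ioi 0)
          have ht' : (0:ℝ) < t := ht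
          have h4 : max (f p + t * u p) (g p + t * v p) = f p + t * max (u p) (v p) := by
            rw [h, mul_max_of_nonneg _ _ ht'.le, max_add_add_left]
          rw [h4, h, max_self]
          field_simp
          ring
        exact Tendsto.congr' (Filter.EventuallyEq.symm hev) tendsto_const_nhds
      · -- g p < f p : limit is u p
        have hLp : L p = u p := by
          simp only [hL_def, hA_def, hB_def, hC_def, Set.indicator_apply, Set.mem_setOf_eq]
          rw [if_pos h, if_neg (by exact not_lt.mpr h.le), if_neg h.ne']
          ring
        rw [hLp]
        have hev : ∀ᶠ t in nhdsWithin (0:ℝ) (Set.Ioi 0),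
            (fun t : ℝ => (1 / t) * (max (f p + t * u p) (g p + t * v p)
              - max (f p) (g p))) t = u p := by
          have hc : Tendsto (fun t : ℝ => g p - f p + t * (v p - u p)) (nhds 0)
              (nhds (g p - f p)) := by
            have : Continuous (fun t : ℝ => g p - f p + t * (v p - u p)) := by continuity
            simpa using this.tendsto 0
          have hlt : ∀ᶠ t in nhds (0:ℝ), g p - f p + t * (v p - u p) < 0 :=
            hc.eventually_lt_const (by linarith)
          filter_upwards [nhdsWithin_le_nhds hlt, self_mem_nhdsWithin]
            with t hlt' (ht : t ∈ Set.Ioi 0)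
          have ht' : (0:ℝ) < t := ht
          have h3 : g p + t * v p ≤ f p + t * u p := by nlinarith
          rw [max_eq_left h3, max_eq_left h.le]
          field_simp
          ring
        exact Tendsto.congr' (Filter.EventuallyEq.symm hev) tendsto_const_nhds
  refine key.congr (fun t => ?_)
  rw [← integral_const_mul]
end
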